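/- Let p be a prime. The number of orbits of the diagonal left action of SL(2, ZMod p) on pairs of column vectors in (ZMod p)^2, i.e., on ((ZMod p)^2)^2 with simultaneous matrix multiplication on both vectors, is 2p + 1. -/

import Mathlib

/-- The orbit of a pair of column vectors in `(ZMod p)²` under the diagonal left action
of `SL(2, ZMod p)`. -/
def pairOrbit (p : ℕ) (v : (Fin 2 → ZMod p) × (Fin 2 → ZMod p)) :
    Set ((Fin 2 → ZMod p) × (Fin 2 → ZMod p)) :=
  { w | ∃ S : Matrix.SpecialLinearGroup (Fin 2) (ZMod p),
      ((S : Matrix (Fin 2) (Fin 2) (ZMod p)).mulVec v.1,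
        (S : Matrix (Fin 2) (Fin 2) (ZMod p)).mulVec v.2) = w }

set_option linter.unusedSectionVars false
set_option maxHeartbeats 1000000

namespace CardOrbitsAux

variable {p : ℕ} [Fact p.Prime]

abbrev V (p : ℕ) := Fin 2 → ZMod p
abbrev SL (p : ℕ) := Matrix.SpecialLinearGroup (Fin 2) (ZMod p)

def act (S : SL p) (x : V p × V p) : V p × V p :=
  ((S : Matrix (Fin 2) (Fin 2) (ZMod p)).mulVec x.1,
   (S : Matrix (Fin 2) (Fin 2) (ZMod p)).mulVec x.2)

lemma mem_pairOrbit {x y : V p × V p} : y ∈ pairOrbit p x ↔ ∃ S, act S x = y := Iff.rfl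

lemma act_mul (S T : SL p) (x : V p × V p) : act (S * T) x = act S (act T x) := by
  simp only [act, Matrix.SpecialLinearGroup.coe_mul, Matrix.mulVec_mulVec]

lemma act_one (x : V p × V p) : act 1 x = x := by simp [act]

lemma act_inv_act (S : SL p) (x : V p × V p) : act S⁻¹ (act S x) = x := by
  rw [← act_mul, inv_mul_cancel, act_one]

lemma pairOrbit_act (S : SL p) (x : V p × V p) : pairOrbit p (act S x) = pairOrbit p x := by
  ext y
  rw [mem_pairOrbit, mem_pairOrbit]
  constructor
  · rintro ⟨T, rfl⟩
    exact ⟨T * S, by rw [act_mul]⟩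
  · rintro ⟨T, rfl⟩
    exact ⟨T * S⁻¹, by rw [act_mul, act_inv_act]⟩

lemma pairOrbit_eq_iff {x y : V p × V p} :
    pairOrbit p x = pairOrbit p y ↔ ∃ S, act S x = y := by
  constructor
  · intro h
    have : y ∈ pairOrbit p x := by rw [h, mem_pairOrbit]; exact ⟨1, act_one y⟩
    exact this
  · rintro ⟨S, rfl⟩
    exact (pairOrbit_act S x).symm

def det2 (x : V p × V p) : ZMod p := x.1 0 * x.2 1 - x.1 1 * x.2 0

lemma det2_act (S : SL p) (x : V p × V p) : det2 (act S x) = det2 x := by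
  have hdet : S.1 0 0 * S.1 1 1 - S.1 0 1 * S.1 1 0 = 1 := by
    have := S.2; rwa [Matrix.det_fin_two] at this
  simp only [det2, act, Matrix.mulVec, dotProduct, Fin.sum_univ_two]
  linear_combination (x.1 0 * x.2 1 - x.1 1 * x.2 0) * hdet

lemma fst_eq_zero_iff (S : SL p) (x : V p × V p) : (act S x).1 = 0 ↔ x.1 = 0 := by
  constructor
  · intro h
    have h2 := congrArg Prod.fst (act_inv_act S x)
    rw [← h2]
    show ((S⁻¹ : SL p) : Matrix (Fin 2) (Fin 2) (ZMod p)).mulVec (act S x).1 = 0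
    rw [h, Matrix.mulVec_zero]
  · intro h
    show ((S : SL p) : Matrix (Fin 2) (Fin 2) (ZMod p)).mulVec x.1 = 0
    rw [h, Matrix.mulVec_zero]

lemma snd_eq_zero_iff (S : SL p) (x : V p × V p) : (act S x).2 = 0 ↔ x.2 = 0 := by
  constructor
  · intro h
    have h2 := congrArg Prod.snd (act_inv_act S x)
    rw [← h2]
    show ((S⁻¹ : SL p) : Matrix (Fin 2) (Fin 2) (ZMod p)).mulVec (act S x).2 = 0
    rw [h, Matrix.mulVec_zero]
  · intro h
    show ((S : SL p) : Matrix (Fin 2) (Fin 2) (ZMod p)).mulVec x.2 = 0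
    rw [h, Matrix.mulVec_zero]

lemma exists_ne_zero {v : V p} (hv : v ≠ 0) : v 0 ≠ 0 ∨ v 1 ≠ 0 := by
  by_contra h
  push_neg at h
  apply hv
  funext i
  fin_cases i
  · exact h.1
  · exact h.2

def aval (v w : V p) : ZMod p := if v 0 ≠ 0 then w 0 / v 0 else w 1 / v 1

lemma eq_smul_of_det0 {v w : V p} (hv : v ≠ 0) (hd : v 0 * w 1 - v 1 * w 0 = 0) :
    w = aval v w • v := by
  unfold aval
  by_cases h0 : v 0 ≠ 0
  · rw [if_pos h0]
    funext i
    fin_cases i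
    · simp [div_mul_cancel₀, h0]
    · show w 1 = w 0 / v 0 * v 1
      field_simp
      linear_combination hd
  · rw [if_neg h0]
    push_neg at h0
    have h1 : v 1 ≠ 0 := by rcases exists_ne_zero hv with h | h; exact absurd h0 h; exact h
    have hw0 : w 0 = 0 := by
      have h2 : v 1 * w 0 = 0 := by linear_combination -hd + w 1 * h0
      rcases mul_eq_zero.mp h2 with h | h
      · exact absurd h h1
      · exact h
    funext i
    fin_cases i
    · show w 0 = w 1 / v 1 * v 0
      rw [hw0, h0, mul_zero]
    · show w 1 = w 1 / v 1 * v 1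
      field_simp

lemma aval_smul {v : V p} (hv : v ≠ 0) (a : ZMod p) : aval v (a • v) = a := by
  unfold aval
  by_cases h0 : v 0 ≠ 0
  · rw [if_pos h0]
    show a * v 0 / v 0 = a
    field_simp
  · rw [if_neg h0]
    push_neg at h0
    have h1 : v 1 ≠ 0 := by rcases exists_ne_zero hv with h | h; exact absurd h0 h; exact h
    show a * v 1 / v 1 = a
    field_simp

/-- Complete orbit invariant. -/
def F (x : V p × V p) : (ZMod p × ZMod p) ⊕ Bool :=
  if x.1 = 0 then (if x.2 = 0 then .inr true else .inr false)
  else .inl (det2 x, if det2 x = 0 then aval x.1 x.2 else 0)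

lemma F_act (S : SL p) (x : V p × V p) : F (act S x) = F x := by
  unfold F
  by_cases h1 : x.1 = 0
  · rw [if_pos ((fst_eq_zero_iff S x).mpr h1), if_pos h1]
    by_cases h2 : x.2 = 0
    · rw [if_pos ((snd_eq_zero_iff S x).mpr h2), if_pos h2]
    · rw [if_neg (fun h => h2 ((snd_eq_zero_iff S x).mp h)), if_neg h2]
  · rw [if_neg (fun h => h1 ((fst_eq_zero_iff S x).mp h)), if_neg h1, det2_act]
    by_cases hd : det2 x = 0
    · rw [if_pos hd, if_pos hd]
      have h1' : (act S x).1 ≠ 0 := fun h => h1 ((fst_eq_zero_iff S x).mp h)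
      have hx : x.2 = aval x.1 x.2 • x.1 := eq_smul_of_det0 h1 hd
      have key : (act S x).2 = aval x.1 x.2 • (act S x).1 := by
        show (S : Matrix (Fin 2) (Fin 2) (ZMod p)).mulVec x.2
            = aval x.1 x.2 • (S : Matrix (Fin 2) (Fin 2) (ZMod p)).mulVec x.1
        conv_lhs => rw [hx]
        rw [Matrix.mulVec_smul]
      rw [key, aval_smul h1']
    · rw [if_neg hd, if_neg hd]

lemma exists_mulVec_e1 {v : V p} (hv : v ≠ 0) :
    ∃ S : SL p, (S : Matrix (Fin 2) (Fin 2) (ZMod p)).mulVec ![1, 0] = v := by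
  rcases exists_ne_zero hv with h0 | h1
  · refine ⟨⟨!![v 0, 0; v 1, (v 0)⁻¹], ?_⟩, ?_⟩
    · rw [Matrix.det_fin_two_of]
      field_simp
      ring
    · funext i
      fin_cases i <;>
        simp [Matrix.mulVec, dotProduct, Fin.sum_univ_two]
  · refine ⟨⟨!![v 0, -(v 1)⁻¹; v 1, 0], ?_⟩, ?_⟩
    · rw [Matrix.det_fin_two_of]
      field_simp
      ring
    · funext i
      fin_cases i <;>
        simp [Matrix.mulVec, dotProduct, Fin.sum_univ_two]

lemma inv_mulVec_eq {S : SL p} {v w : V p}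
    (h : (S : Matrix (Fin 2) (Fin 2) (ZMod p)).mulVec v = w) :
    ((S⁻¹ : SL p) : Matrix (Fin 2) (Fin 2) (ZMod p)).mulVec w = v := by
  rw [← h, Matrix.mulVec_mulVec, ← Matrix.SpecialLinearGroup.coe_mul, inv_mul_cancel,
    Matrix.SpecialLinearGroup.coe_one, Matrix.one_mulVec]

def rep (i : ZMod p ⊕ (ZMod p)ˣ ⊕ Bool) : V p × V p :=
  match i with
  | .inl a => (![1, 0], ![a, 0])
  | .inr (.inl u) => (![1, 0], ![0, (u : ZMod p)])
  | .inr (.inr true) => (0, 0)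
  | .inr (.inr false) => (0, ![1, 0])

lemma e1_ne_zero : (![1, 0] : V p) ≠ 0 := by
  intro h
  have := congrFun h 0
  simp at this

lemma F_rep_inl (a : ZMod p) : F (rep (.inl a)) = .inl (0, a) := by
  unfold F rep det2
  rw [if_neg e1_ne_zero]
  simp only [Matrix.cons_val_zero, Matrix.cons_val_one, Matrix.head_cons]
  norm_num
  show aval ![1, 0] ![a, 0] = a
  have : (![a, 0] : V p) = a • ![1, 0] := by
    funext i; fin_cases i <;> simp
  rw [this, aval_smul e1_ne_zero]

lemma F_rep_u (u : (ZMod p)ˣ) : F (rep (.inr (.inl u))) = .inl ((u : ZMod p), 0) := by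
  unfold F rep det2
  rw [if_neg e1_ne_zero]
  simp only [Matrix.cons_val_zero, Matrix.cons_val_one, Matrix.head_cons]
  simp [u.ne_zero]

lemma F_rep_b (b : Bool) : F (rep (p := p) (.inr (.inr b))) = Sum.inr b := by
  cases b
  · show F ((0, ![1, 0]) : V p × V p) = Sum.inr false
    unfold F
    rw [if_pos rfl, if_neg e1_ne_zero]
  · show F ((0, 0) : V p × V p) = Sum.inr true
    unfold F
    rw [if_pos rfl, if_pos rfl]

lemma rep_eq_of_F (i j : ZMod p ⊕ (ZMod p)ˣ ⊕ Bool)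
    (h : F (rep (p := p) i) = F (rep j)) : i = j := by
  rcases i with a | u | b <;> rcases j with a' | u' | b' <;>
    simp only [F_rep_inl, F_rep_u, F_rep_b, Sum.inl.injEq, Sum.inr.injEq,
      Prod.mk.injEq] at h
  · rw [h.2]
  · exact absurd h.1.symm u'.ne_zero
  · exact (Sum.inl_ne_inr h).elim
  · exact absurd h.1 u.ne_zero
  · rw [Units.ext h.1]
  · exact (Sum.inl_ne_inr h).elim
  · exact (Sum.inr_ne_inl h).elim
  · exact (Sum.inr_ne_inl h).elim
  · rw [h]

lemma exists_rep (x : V p × V p) : ∃ i, ∃ S : SL p, act S x = rep i := by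
  by_cases h1 : x.1 = 0
  · by_cases h2 : x.2 = 0
    · exact ⟨.inr (.inr true), 1, by rw [act_one]; exact Prod.ext h1 h2⟩
    · obtain ⟨S, hS⟩ := exists_mulVec_e1 h2
      refine ⟨.inr (.inr false), S⁻¹, Prod.ext ?_ ?_⟩
      · show ((S⁻¹ : SL p) : Matrix (Fin 2) (Fin 2) (ZMod p)).mulVec x.1 = 0
        rw [h1, Matrix.mulVec_zero]
      · exact inv_mulVec_eq hS
  · obtain ⟨S, hS⟩ := exists_mulVec_e1 h1
    have h1' : ((S⁻¹ : SL p) : Matrix (Fin 2) (Fin 2) (ZMod p)).mulVec x.1 = ![1, 0] :=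
      inv_mulVec_eq hS
    set u : V p := ((S⁻¹ : SL p) : Matrix (Fin 2) (Fin 2) (ZMod p)).mulVec x.2 with hu
    by_cases hd : u 1 = 0
    · refine ⟨.inl (u 0), S⁻¹, Prod.ext h1' ?_⟩
      show u = ![u 0, 0]
      funext i
      fin_cases i
      · simp
      · simpa using hd
    · have hdetU : (!![1, -(u 0) / u 1; 0, 1] : Matrix (Fin 2) (Fin 2) (ZMod p)).det = 1 := by
        rw [Matrix.det_fin_two_of]; ring
      set U : SL p := ⟨!![1, -(u 0) / u 1; 0, 1], hdetU⟩ with hU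
      have hUc : (U : Matrix (Fin 2) (Fin 2) (ZMod p)) = !![1, -(u 0) / u 1; 0, 1] := rfl
      refine ⟨.inr (.inl (Units.mk0 (u 1) hd)), U * S⁻¹, ?_⟩
      rw [act_mul]
      have hact : act S⁻¹ x = (![1, 0], u) := Prod.ext h1' rfl
      rw [hact]
      refine Prod.ext ?_ ?_
      · show (U : Matrix (Fin 2) (Fin 2) (ZMod p)).mulVec ![1, 0] = ![1, 0]
        rw [hUc]
        funext i
        fin_cases i <;> simp [Matrix.mulVec, dotProduct, Fin.sum_univ_two]
      · show (U : Matrix (Fin 2) (Fin 2) (ZMod p)).mulVec u = ![0, (u 1)]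
        rw [hUc]
        funext i
        fin_cases i
        · simp [Matrix.mulVec, dotProduct, Fin.sum_univ_two]
          field_simp
          ring
        · simp [Matrix.mulVec, dotProduct, Fin.sum_univ_two]

end CardOrbitsAux

open CardOrbitsAux in
theorem card_orbits_pairs (p : ℕ) (hp : p.Prime) :
    Nat.card { O : Set ((Fin 2 → ZMod p) × (Fin 2 → ZMod p)) // ∃ v, O = pairOrbit p v } =
      2 * p + 1 := by
  haveI : Fact p.Prime := ⟨hp⟩
  haveI : NeZero p := ⟨hp.ne_zero⟩
  set g : (ZMod p ⊕ (ZMod p)ˣ ⊕ Bool) →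
      { O : Set ((Fin 2 → ZMod p) × (Fin 2 → ZMod p)) // ∃ v, O = pairOrbit p v } :=
    fun i => ⟨pairOrbit p (rep i), ⟨rep i, rfl⟩⟩ with hg
  have hinj : Function.Injective g := by
    intro i j h
    have h2 : pairOrbit p (rep i) = pairOrbit p (rep j) := congrArg Subtype.val h
    obtain ⟨S, hS⟩ := pairOrbit_eq_iff.mp h2
    refine rep_eq_of_F i j ?_
    rw [← hS, F_act]
  have hsurj : Function.Surjective g := by
    rintro ⟨O, v, rfl⟩
    obtain ⟨i, S, hS⟩ := exists_rep v
    refine ⟨i, Subtype.ext ?_⟩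
    show pairOrbit p (rep i) = pairOrbit p v
    rw [← hS, pairOrbit_act]
  have hcard := Nat.card_eq_of_bijective g ⟨hinj, hsurj⟩
  rw [← hcard, Nat.card_sum, Nat.card_sum, Nat.card_zmod]
  have hu : Nat.card (ZMod p)ˣ = p - 1 := by
    rw [Nat.card_eq_fintype_card, ZMod.card_units_eq_totient, Nat.totient_prime hp]
  have hb : Nat.card Bool = 2 := by simp [Nat.card_eq_fintype_card]
  rw [hu, hb]
  have := hp.two_le
  omega
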